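/- Let ψ : ℝ → ℝ be measurable with ∫_ℝ (1 + |x|)·|ψ(x)| dx < ∞ and ∫_ℝ ψ(x) dx = 0. Let 0 < α ≤ 1, let x₀ ∈ ℝ, and let f : ℝ → ℝ be bounded and measurable with |f(x₀ + δ) − f(x₀)| ≤ C·|δ|^α for all δ ∈ ℝ (Hölder continuity of f at the single point x₀). Then there exists a constant C′ ≥ 0 such that for every a ≠ 0 and every b ∈ ℝ, |∫_ℝ f(x)·|a|^{−1/2}·ψ((x − (x₀ + b))/a) dx| ≤ C′·|a|^{1/2}·(|a|^α + |b|^α). -/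

import Mathlib

open MeasureTheory Real

lemma my_add_rpow_le {x y p : ℝ} (hx : 0 ≤ x) (hy : 0 ≤ y) (hp : 0 ≤ p) (hp1 : p ≤ 1) :
    (x + y) ^ p ≤ x ^ p + y ^ p := by
  have h := NNReal.rpow_add_le_add_rpow x.toNNReal y.toNNReal hp hp1
  calc (x + y) ^ p = ((x.toNNReal + y.toNNReal : NNReal) : ℝ) ^ p := by
        rw [NNReal.coe_add, Real.coe_toNNReal x hx, Real.coe_toNNReal y hy]
    _ = (((x.toNNReal + y.toNNReal) ^ p : NNReal) : ℝ) := by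
        rw [NNReal.coe_rpow]
    _ ≤ ((x.toNNReal ^ p + y.toNNReal ^ p : NNReal) : ℝ) := by exact_mod_cast h
    _ = x ^ p + y ^ p := by
        rw [NNReal.coe_add, NNReal.coe_rpow, NNReal.coe_rpow,
          Real.coe_toNNReal x hx, Real.coe_toNNReal y hy]

/-- **Theorem 3.3** (local regularity of the wavelet transform).
If `ψ` is measurable with `∫ (1 + |x|)·|ψ x| < ∞` and `∫ ψ = 0`, and `f` is bounded,
measurable and Hölder continuous at the single point `x₀` with exponent `α ∈ (0, 1]` and
constant `C`, then there is `C' ≥ 0` such that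
`|⟨f, ψ^{a, x₀ + b}⟩| ≤ C' · |a|^(1/2) · (|a|^α + |b|^α)` for all `a ≠ 0`, `b`. -/
theorem wavelet_coeff_local_regularity
    (ψ f : ℝ → ℝ) (α C x₀ : ℝ)
    (hψ_meas : Measurable ψ)
    (hψ_int : Integrable (fun x : ℝ => (1 + |x|) * |ψ x|))
    (hψ_zero : (∫ x : ℝ, ψ x) = 0)
    (hα_pos : 0 < α) (hα_le : α ≤ 1)
    (hf_meas : Measurable f)
    (hf_bdd : ∃ B : ℝ, ∀ x : ℝ, |f x| ≤ B)
    (hf_holder_at : ∀ δ : ℝ, |f (x₀ + δ) - f x₀| ≤ C * |δ| ^ α) :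
    ∃ C' : ℝ, 0 ≤ C' ∧ ∀ a : ℝ, a ≠ 0 → ∀ b : ℝ,
      |∫ x : ℝ, f x * (|a| ^ (-(1 : ℝ) / 2) * ψ ((x - (x₀ + b)) / a))| ≤
        C' * |a| ^ ((1 : ℝ) / 2) * (|a| ^ α + |b| ^ α) := by
  obtain ⟨B, hB⟩ := hf_bdd
  set I : ℝ := ∫ x : ℝ, (1 + |x|) * |ψ x| with hI_def
  have hI0 : 0 ≤ I := integral_nonneg fun x => by positivity
  have hC0 : 0 ≤ C := by
    have h := hf_holder_at 1
    simp only [abs_one, Real.one_rpow, mul_one] at h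
    exact le_trans (abs_nonneg _) h
  have hψ_L1 : Integrable ψ := by
    refine hψ_int.mono' hψ_meas.aestronglyMeasurable (ae_of_all _ fun x => ?_)
    have h1 : (1:ℝ) * |ψ x| ≤ (1 + |x|) * |ψ x| := by
      apply mul_le_mul_of_nonneg_right _ (abs_nonneg _); linarith [abs_nonneg x]
    simpa using h1
  refine ⟨C * I, by positivity, fun a ha b => ?_⟩
  have haabs : 0 < |a| := abs_pos.mpr ha
  set c : ℝ := x₀ + b with hc
  set G : ℝ → ℝ := fun t => (f (c + a * t) - f x₀) * ψ t with hG
  set K : ℝ := C * (|a| ^ α + |b| ^ α) with hK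
  have hK0 : 0 ≤ K := by positivity
  -- pointwise bound
  have hkey : ∀ t : ℝ, |f (c + a * t) - f x₀| ≤ K * (1 + |t|) := by
    intro t
    have htα : |t| ^ α ≤ 1 + |t| := by
      rcases le_or_gt |t| 1 with h | h
      · have := Real.rpow_le_one (abs_nonneg t) h hα_pos.le
        linarith [abs_nonneg t]
      · have h1 : |t| ^ α ≤ |t| ^ (1:ℝ) :=
          Real.rpow_le_rpow_of_exponent_le h.le hα_le
        rw [Real.rpow_one] at h1; linarith
    have e : c + a * t = x₀ + (b + a * t) := by rw [hc]; ring
    rw [e]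
    calc |f (x₀ + (b + a * t)) - f x₀| ≤ C * |b + a * t| ^ α := hf_holder_at _
      _ ≤ C * (|b| + |a * t|) ^ α := by
          apply mul_le_mul_of_nonneg_left _ hC0
          exact Real.rpow_le_rpow (abs_nonneg _) (abs_add_le _ _) hα_pos.le
      _ ≤ C * (|b| ^ α + |a * t| ^ α) := by
          apply mul_le_mul_of_nonneg_left _ hC0
          exact my_add_rpow_le (abs_nonneg _) (abs_nonneg _) hα_pos.le hα_le
      _ ≤ K * (1 + |t|) := by
          rw [hK, abs_mul, Real.mul_rpow (abs_nonneg a) (abs_nonneg t)]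
          have h1 : |b| ^ α ≤ |b| ^ α * (1 + |t|) :=
            le_mul_of_one_le_right (Real.rpow_nonneg (abs_nonneg b) α)
              (by linarith [abs_nonneg t])
          have h2 : |a| ^ α * |t| ^ α ≤ |a| ^ α * (1 + |t|) :=
            mul_le_mul_of_nonneg_left htα (Real.rpow_nonneg (abs_nonneg a) α)
          nlinarith [Real.rpow_nonneg (abs_nonneg a) α, Real.rpow_nonneg (abs_nonneg b) α,
            abs_nonneg t, hC0]
  have hG_meas : Measurable G := by
    apply Measurable.mul _ hψ_meas
    exact (hf_meas.comp (measurable_const.add (measurable_const_mul a))).sub measurable_const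
  have hmaj : Integrable (fun t : ℝ => K * ((1 + |t|) * |ψ t|)) := hψ_int.const_mul K
  have hG_int : Integrable G := by
    refine hmaj.mono' hG_meas.aestronglyMeasurable (ae_of_all _ fun t => ?_)
    have : ‖G t‖ = |f (c + a * t) - f x₀| * |ψ t| := by rw [hG]; simp [abs_mul]
    rw [this]
    exact le_trans (mul_le_mul_of_nonneg_right (hkey t) (abs_nonneg _))
      (le_of_eq (mul_assoc _ _ _))
  -- the integral bound for G
  have hGbound : |∫ t : ℝ, G t| ≤ K * I := by
    calc |∫ t : ℝ, G t| ≤ ∫ t : ℝ, |G t| := by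
          simpa using norm_integral_le_integral_norm G
      _ ≤ ∫ t : ℝ, K * ((1 + |t|) * |ψ t|) := by
          refine integral_mono hG_int.abs hmaj fun t => ?_
          have : |G t| = |f (c + a * t) - f x₀| * |ψ t| := by rw [hG]; simp [abs_mul]
          rw [this]
          exact le_trans (mul_le_mul_of_nonneg_right (hkey t) (abs_nonneg _))
            (le_of_eq (mul_assoc _ _ _))
      _ = K * I := by rw [integral_const_mul]
  -- change of variables
  set Φ : ℝ → ℝ := fun t => f (c + a * t) * ψ t with hΦ
  have hstep1 : (∫ x : ℝ, f x * (|a| ^ (-(1:ℝ) / 2) * ψ ((x - c) / a)))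
      = |a| ^ (-(1:ℝ) / 2) * ∫ x : ℝ, f x * ψ ((x - c) / a) := by
    rw [← integral_const_mul]
    congr 1; funext x; ring
  have hstep2 : (∫ x : ℝ, f x * ψ ((x - c) / a)) = |a| * ∫ t : ℝ, Φ t := by
    have e1 : (fun x : ℝ => f x * ψ ((x - c) / a)) = fun x => (fun y => Φ (y / a)) (x - c) := by
      funext x
      rw [hΦ]
      simp only []
      congr 2
      field_simp
      ring
    rw [e1, integral_sub_right_eq_self (fun y : ℝ => Φ (y / a)) c,
      MeasureTheory.Measure.integral_comp_div Φ a, smul_eq_mul]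
  have hstep3 : (∫ t : ℝ, Φ t) = ∫ t : ℝ, G t := by
    have e2 : (fun t : ℝ => Φ t) = fun t => G t + f x₀ * ψ t := by
      funext t; rw [hΦ, hG]; ring
    rw [e2, integral_add hG_int (hψ_L1.const_mul _), integral_const_mul, hψ_zero, mul_zero,
      add_zero]
  -- conclude
  rw [hc] at hstep1 hstep2 ⊢
  rw [hstep1, hstep2, hstep3, abs_mul, abs_mul]
  have hpow : |a| ^ (-(1:ℝ) / 2) * |a| = |a| ^ ((1:ℝ) / 2) := by
    nth_rewrite 2 [← Real.rpow_one |a|]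
    rw [← Real.rpow_add haabs]; norm_num
  rw [abs_of_nonneg (Real.rpow_nonneg (abs_nonneg a) _), abs_abs]
  calc |a| ^ (-(1:ℝ) / 2) * (|a| * |∫ t : ℝ, G t|) = |a| ^ ((1:ℝ) / 2) * |∫ t : ℝ, G t| := by
        rw [← mul_assoc, hpow]
    _ ≤ |a| ^ ((1:ℝ) / 2) * (K * I) :=
        mul_le_mul_of_nonneg_left hGbound (Real.rpow_nonneg (abs_nonneg a) _)
    _ = C * I * |a| ^ ((1:ℝ) / 2) * (|a| ^ α + |b| ^ α) := by rw [hK]; ring
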